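/- If S, Q ∈ 𝒮_𝒢 and the product S Q is a symmetric matrix, then S Q ∈ 𝒮_𝒢. -/

import Mathlib

open Matrix Finset

abbrev PairIdx (d : ℕ) := {p : Fin d × Fin d // p.1 < p.2}

/-- Pairs `r` and `s` lie in the same block: the unordered pairs of cluster labels coincide. -/
def sameBlock {d K : ℕ} (g : Fin d → Fin K) (r s : PairIdx d) : Prop :=
  (g r.1.1 = g s.1.1 ∧ g r.1.2 = g s.1.2) ∨ (g r.1.1 = g s.1.2 ∧ g r.1.2 = g s.1.1)

instance {d K : ℕ} (g : Fin d → Fin K) : DecidableRel (sameBlock g) :=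
  fun r s => by unfold sameBlock; infer_instance

/-- The overlap type `φ̄(r,s)`: the multiset of cluster labels of the elements of
`{i_r, j_r} ∩ {i_s, j_s}`.  The empty multiset encodes the type `(0,0)`, the singleton
`{k}` encodes `(0,k)`, and the two-element multiset `{k₁,k₂}` encodes
`(min(k₁,k₂), max(k₁,k₂))`. -/
def overlap {d K : ℕ} (g : Fin d → Fin K) (r s : PairIdx d) : Multiset (Fin K) :=
  (({r.1.1, r.1.2} ∩ {s.1.1, s.1.2} : Finset (Fin d)).val.map g)

/-- The cardinality of the block containing `r`. -/
def blockCard {d K : ℕ} (g : Fin d → Fin K) (r : PairIdx d) : ℕ :=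
  (Finset.univ.filter (fun t => sameBlock g r t)).card

/-- The blockwise-averaging matrix `Γ`. -/
noncomputable def Gamma {d K : ℕ} (g : Fin d → Fin K) :
    Matrix (PairIdx d) (PairIdx d) ℝ :=
  Matrix.of fun r s => if sameBlock g r s then (1 : ℝ) / (blockCard g r) else 0

/-- Membership in the class `𝒮_𝒢`. -/
def inSG {d K : ℕ} (g : Fin d → Fin K) (S : Matrix (PairIdx d) (PairIdx d) ℝ) : Prop :=
  S.IsSymm ∧ ∀ r r' s s' : PairIdx d, sameBlock g r r' → sameBlock g s s' →
    overlap g r s = overlap g r' s' → S r s = S r' s'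

section Aux

variable {d K : ℕ}

def pset (r : PairIdx d) : Finset (Fin d) := {r.1.1, r.1.2}

lemma mem_pset {x : Fin d} {r : PairIdx d} : x ∈ pset r ↔ x = r.1.1 ∨ x = r.1.2 := by
  simp [pset]

lemma pset_card (r : PairIdx d) : (pset r).card = 2 := by
  rw [pset, Finset.card_insert_of_notMem (by simp [(ne_of_lt r.2)]), Finset.card_singleton]

lemma pair_ext {r t : PairIdx d} (h : pset r = pset t) : r = t := by
  obtain ⟨⟨a,b⟩,hab⟩ := r; obtain ⟨⟨c,e⟩,hce⟩ := t
  simp only at hab hce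
  have h1 : a ∈ ({c, e} : Finset (Fin d)) := by
    rw [show ({c,e} : Finset (Fin d)) = pset ⟨(c,e),hce⟩ from rfl, ← h]; simp [pset]
  have h2 : b ∈ ({c, e} : Finset (Fin d)) := by
    rw [show ({c,e} : Finset (Fin d)) = pset ⟨(c,e),hce⟩ from rfl, ← h]; simp [pset]
  simp only [Finset.mem_insert, Finset.mem_singleton] at h1 h2
  apply Subtype.ext
  rcases h1 with rfl|rfl <;> rcases h2 with rfl|rfl <;> simp_all <;>
    first
    | rfl
    | exact absurd hce (lt_asymm hab)
    | exact absurd hab (lt_irrefl _)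
    | exact absurd hce (lt_irrefl _)
    | exact absurd hab (lt_asymm hce)

lemma overlap_def (g : Fin d → Fin K) (r s : PairIdx d) :
    overlap g r s = ((pset r ∩ pset s).val.map g) := rfl

/-- Extend a label-preserving partial matching to a label-preserving permutation. -/
lemma exists_perm_aux (g : Fin d → Fin K) :
    ∀ (n : ℕ) (l : List (Fin d × Fin d)), l.length = n → ∀ (F : Finset (Fin d)),
    (l.map Prod.fst).Nodup → (l.map Prod.snd).Nodup →
    (∀ p ∈ l, g p.1 = g p.2) → (∀ p ∈ l, p.1 ∉ F ∧ p.2 ∉ F) →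
    ∃ σ : Equiv.Perm (Fin d), (∀ i, g (σ i) = g i) ∧ (∀ p ∈ l, σ p.1 = p.2) ∧
      ∀ x ∈ F, σ x = x := by
  intro n
  induction n with
  | zero =>
      intro l hl F _ _ _ _
      rw [List.length_eq_zero_iff] at hl; subst hl
      exact ⟨1, fun i => rfl, by simp, by simp⟩
  | succ n ih =>
      rintro (_ | ⟨⟨x, y⟩, l⟩) hl F h1 h2 h3 h4
      · simp at hl
      simp only [List.length_cons, Nat.succ.injEq] at hl
      simp only [List.map_cons, List.nodup_cons, List.mem_map] at h1 h2
      obtain ⟨hx, h1⟩ := h1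
      obtain ⟨hy, h2⟩ := h2
      have hgxy : g x = g y := h3 (x, y) List.mem_cons_self
      obtain ⟨hxF, hyF⟩ := h4 (x, y) List.mem_cons_self
      set τ := Equiv.swap x y with hτ
      have hτg : ∀ i, g (τ i) = g i := by
        intro i
        rw [hτ, Equiv.swap_apply_def]
        split
        · next h => rw [h, hgxy]
        · split
          · next h => rw [h, ← hgxy]
          · rfl
      set l' : List (Fin d × Fin d) := l.map (fun q => (τ q.1, q.2)) with hl'
      have hlen : l'.length = n := by rw [hl', List.length_map, hl]
      have hfst : l'.map Prod.fst = (l.map Prod.fst).map τ := by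
        rw [hl', List.map_map, List.map_map]; rfl
      have hsnd : l'.map Prod.snd = l.map Prod.snd := by
        rw [hl', List.map_map]; rfl
      have h1' : (l'.map Prod.fst).Nodup := by
        rw [hfst]; exact h1.map τ.injective
      have h2' : (l'.map Prod.snd).Nodup := by rw [hsnd]; exact h2
      have h3' : ∀ q ∈ l', g q.1 = g q.2 := by
        rintro q hq
        rw [hl', List.mem_map] at hq
        obtain ⟨q₀, hq₀, rfl⟩ := hq
        exact (hτg q₀.1).trans (h3 q₀ (List.mem_cons_of_mem _ hq₀))
      have h4' : ∀ q ∈ l', q.1 ∉ insert y F ∧ q.2 ∉ insert y F := by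
        rintro q hq
        rw [hl', List.mem_map] at hq
        obtain ⟨q₀, hq₀, rfl⟩ := hq
        obtain ⟨hqF1, hqF2⟩ := h4 q₀ (List.mem_cons_of_mem _ hq₀)
        constructor
        · simp only [Finset.mem_insert, not_or]
          constructor
          · intro hcon
            have : q₀.1 = x := τ.injective (by rw [hcon, hτ, Equiv.swap_apply_left])
            exact hx ⟨q₀, hq₀, this⟩
          · rw [hτ, Equiv.swap_apply_def]
            split
            · exact hyF
            · split
              · exact hxF
              · exact hqF1
        · simp only [Finset.mem_insert, not_or]
          exact ⟨fun hcon => hy ⟨q₀, hq₀, hcon⟩, hqF2⟩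
      obtain ⟨σ', hσ'g, hσ'l, hσ'F⟩ := ih l' hlen (insert y F) h1' h2' h3' h4'
      refine ⟨τ.trans σ', fun i => (hσ'g (τ i)).trans (hτg i), ?_, ?_⟩
      · rintro q hq
        rcases List.mem_cons.mp hq with rfl | hq
        · simp only [Equiv.trans_apply]
          rw [hτ, Equiv.swap_apply_left]
          exact hσ'F y (Finset.mem_insert_self _ _)
        · simp only [Equiv.trans_apply]
          exact hσ'l (τ q.1, q.2) (by rw [hl', List.mem_map]; exact ⟨q, hq, rfl⟩)
      · intro z hz
        have hzx : z ≠ x := fun h => hxF (h ▸ hz)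
        have hzy : z ≠ y := fun h => hyF (h ▸ hz)
        simp only [Equiv.trans_apply]
        rw [hτ, Equiv.swap_apply_of_ne_of_ne hzx hzy]
        exact hσ'F z (Finset.mem_insert_of_mem hz)

/-- The action of a permutation of `Fin d` on pair indices. -/
def permPair (σ : Equiv.Perm (Fin d)) (r : PairIdx d) : PairIdx d :=
  if h : σ r.1.1 < σ r.1.2 then ⟨(σ r.1.1, σ r.1.2), h⟩
  else ⟨(σ r.1.2, σ r.1.1), by
    rcases lt_or_eq_of_le (not_lt.mp h) with h' | h'
    · exact h'
    · exact absurd (σ.injective h') (ne_of_gt r.2)⟩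

lemma pset_permPair (σ : Equiv.Perm (Fin d)) (r : PairIdx d) :
    pset (permPair σ r) = (pset r).image σ := by
  rw [permPair]
  split <;> simp [pset, Finset.image_insert, Finset.image_singleton, Finset.pair_comm]

/-- The induced equivalence on pair indices. -/
def permPairEquiv (σ : Equiv.Perm (Fin d)) : Equiv.Perm (PairIdx d) where
  toFun := permPair σ
  invFun := permPair σ⁻¹
  left_inv := by
    intro r
    apply pair_ext
    rw [pset_permPair, pset_permPair, Finset.image_image]
    ext z; simp
  right_inv := by
    intro r
    apply pair_ext
    rw [pset_permPair, pset_permPair, Finset.image_image]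
    ext z; simp

variable {g : Fin d → Fin K}

lemma sameBlock_permPair {σ : Equiv.Perm (Fin d)} (hσ : ∀ i, g (σ i) = g i)
    (r : PairIdx d) : sameBlock g (permPair σ r) r := by
  rw [permPair]
  split
  · exact Or.inl ⟨hσ _, hσ _⟩
  · exact Or.inr ⟨hσ _, hσ _⟩

lemma overlap_permPair {σ : Equiv.Perm (Fin d)} (hσ : ∀ i, g (σ i) = g i)
    (r t : PairIdx d) : overlap g (permPair σ r) (permPair σ t) = overlap g r t := by
  rw [overlap_def, overlap_def, pset_permPair, pset_permPair,
    ← Finset.image_inter _ _ σ.injective,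
    Finset.image_val_of_injOn (σ.injective.injOn), Multiset.map_map]
  exact Multiset.map_congr rfl (fun x _ => hσ x)

lemma entry_permPair {S : Matrix (PairIdx d) (PairIdx d) ℝ}
    (hS : inSG g S) {σ : Equiv.Perm (Fin d)} (hσ : ∀ i, g (σ i) = g i)
    (r t : PairIdx d) : S (permPair σ r) (permPair σ t) = S r t :=
  hS.2 _ _ _ _ (sameBlock_permPair hσ r) (sameBlock_permPair hσ t)
    (overlap_permPair hσ r t)

lemma mul_entry_permPair {S Q : Matrix (PairIdx d) (PairIdx d) ℝ}
    (hS : inSG g S) (hQ : inSG g Q) {σ : Equiv.Perm (Fin d)}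
    (hσ : ∀ i, g (σ i) = g i) (r s : PairIdx d) :
    (S * Q) (permPair σ r) (permPair σ s) = (S * Q) r s := by
  rw [Matrix.mul_apply, Matrix.mul_apply]
  rw [← Equiv.sum_comp (permPairEquiv σ) (fun t => S (permPair σ r) t * Q t (permPair σ s))]
  apply Finset.sum_congr rfl
  intro t _
  show S (permPair σ r) (permPair σ t) * Q (permPair σ t) (permPair σ s) = _
  rw [entry_permPair hS hσ, entry_permPair hQ hσ]

end Aux

section Main

variable {d K : ℕ} {g : Fin d → Fin K}

lemma permPair_eq {σ : Equiv.Perm (Fin d)} {r r' : PairIdx d}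
    (h : (pset r).image σ = pset r') : permPair σ r = r' :=
  pair_ext ((pset_permPair σ r).trans h)

lemma image_pair (σ : Fin d → Fin d) (a b : Fin d) :
    ({a, b} : Finset (Fin d)).image σ = {σ a, σ b} := by simp

lemma sameBlock_pick {r r' : PairIdx d} (h : sameBlock g r r') :
    ∃ A B, pset r' = {A, B} ∧ g r.1.1 = g A ∧ g r.1.2 = g B ∧ A ≠ B := by
  rcases h with ⟨h1, h2⟩ | ⟨h1, h2⟩
  · exact ⟨r'.1.1, r'.1.2, rfl, h1, h2, ne_of_lt r'.2⟩
  · exact ⟨r'.1.2, r'.1.1, Finset.pair_comm _ _, h1, h2, (ne_of_lt r'.2).symm⟩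

lemma mate {r r' : PairIdx d} (h : sameBlock g r r') {x x' : Fin d}
    (hx : x ∈ pset r) (hx' : x' ∈ pset r') (hg : g x = g x') :
    ∃ u u', pset r = {x, u} ∧ pset r' = {x', u'} ∧ g u = g u' ∧ x ≠ u ∧ x' ≠ u' := by
  obtain ⟨A, B, hAB, g1, g2, hne⟩ := sameBlock_pick h
  have hx'AB : x' = A ∨ x' = B := by
    have := hx'; rw [hAB, Finset.mem_insert, Finset.mem_singleton] at this; exact this
  have hlt := ne_of_lt r.2
  rcases mem_pset.mp hx with rfl | rfl <;> rcases hx'AB with rfl | rfl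
  · exact ⟨r.1.2, B, rfl, hAB, g2, hlt, hne⟩
  · exact ⟨r.1.2, A, rfl, hAB.trans (Finset.pair_comm _ _),
      g2.trans (hg.symm.trans g1), hlt, hne.symm⟩
  · exact ⟨r.1.1, B, Finset.pair_comm _ _, hAB,
      g1.trans (hg.symm.trans g2), hlt.symm, hne⟩
  · exact ⟨r.1.1, A, Finset.pair_comm _ _, hAB.trans (Finset.pair_comm _ _),
      g1, hlt.symm, hne.symm⟩

end Main

/-- If `S, Q ∈ 𝒮_𝒢` and the product `S Q` is symmetric, then
`S Q ∈ 𝒮_𝒢`. -/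
theorem statement_14 {d K : ℕ} (hd : 2 ≤ d) (hK : 1 ≤ K)
    (g : Fin d → Fin K) (hg : Function.Surjective g)
    (S Q : Matrix (PairIdx d) (PairIdx d) ℝ)
    (hS : inSG g S) (hQ : inSG g Q) (hSQ : (S * Q).IsSymm) :
    inSG g (S * Q) := by
  refine ⟨hSQ, ?_⟩
  intro r r' s s' hrr' hss' hov
  suffices h : ∃ σ : Equiv.Perm (Fin d), (∀ i, g (σ i) = g i) ∧
      permPair σ r = r' ∧ permPair σ s = s' by
    obtain ⟨σ, hσ, h1, h2⟩ := h
    rw [← h1, ← h2, mul_entry_permPair hS hQ hσ]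
  have hcard : (pset r ∩ pset s).card = (pset r' ∩ pset s').card := by
    have h := congrArg Multiset.card hov
    rwa [overlap_def, overlap_def, Multiset.card_map, Multiset.card_map] at h
  rcases hI : (pset r ∩ pset s).card with _ | _ | n
  · -- disjoint case
    have hI0 : pset r ∩ pset s = ∅ := Finset.card_eq_zero.mp hI
    have hI0' : pset r' ∩ pset s' = ∅ := Finset.card_eq_zero.mp (by rw [← hcard, hI])
    have hdisj : ∀ z, z ∈ pset r → z ∈ pset s → False := by
      intro z h1 h2
      have : z ∈ pset r ∩ pset s := Finset.mem_inter.mpr ⟨h1, h2⟩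
      rw [hI0] at this; exact absurd this (Finset.notMem_empty z)
    have hdisj' : ∀ z, z ∈ pset r' → z ∈ pset s' → False := by
      intro z h1 h2
      have : z ∈ pset r' ∩ pset s' := Finset.mem_inter.mpr ⟨h1, h2⟩
      rw [hI0'] at this; exact absurd this (Finset.notMem_empty z)
    obtain ⟨A, B, hAB, gA, gB, hABne⟩ := sameBlock_pick hrr'
    obtain ⟨C, D, hCD, gC, gD, hCDne⟩ := sameBlock_pick hss'
    have hAmem : A ∈ pset r' := by rw [hAB]; simp
    have hBmem : B ∈ pset r' := by rw [hAB]; simp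
    have hCmem : C ∈ pset s' := by rw [hCD]; simp
    have hDmem : D ∈ pset s' := by rw [hCD]; simp
    have hr1 : r.1.1 ∈ pset r := by rw [mem_pset]; left; rfl
    have hr2 : r.1.2 ∈ pset r := by rw [mem_pset]; right; rfl
    have hs1 : s.1.1 ∈ pset s := by rw [mem_pset]; left; rfl
    have hs2 : s.1.2 ∈ pset s := by rw [mem_pset]; right; rfl
    obtain ⟨σ, hσg, hσl, -⟩ := exists_perm_aux g 4
      [(r.1.1, A), (r.1.2, B), (s.1.1, C), (s.1.2, D)] rfl ∅
      (by
        simp only [List.map_cons, List.map_nil, List.nodup_cons, List.mem_cons,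
          List.mem_singleton, List.not_mem_nil, not_or, not_false_iff, and_true,
          List.nodup_nil, List.mem_nil_iff, or_false]
        refine ⟨⟨ne_of_lt r.2, fun h => hdisj _ hr1 (h ▸ hs1), fun h => hdisj _ hr1 (h ▸ hs2)⟩,
          ⟨fun h => hdisj _ hr2 (h ▸ hs1), fun h => hdisj _ hr2 (h ▸ hs2)⟩, ne_of_lt s.2⟩)
      (by
        simp only [List.map_cons, List.map_nil, List.nodup_cons, List.mem_cons,
          List.mem_singleton, List.not_mem_nil, not_or, not_false_iff, and_true,
          List.nodup_nil, List.mem_nil_iff, or_false]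
        refine ⟨⟨hABne, fun h => hdisj' _ hAmem (h ▸ hCmem), fun h => hdisj' _ hAmem (h ▸ hDmem)⟩,
          ⟨fun h => hdisj' _ hBmem (h ▸ hCmem), fun h => hdisj' _ hBmem (h ▸ hDmem)⟩, hCDne⟩)
      (by
        intro p hp
        simp only [List.mem_cons, List.mem_singleton, List.not_mem_nil, or_false] at hp
        rcases hp with h | h | h | h
        · rw [h]; exact gA
        · rw [h]; exact gB
        · rw [h]; exact gC
        · rw [h]; exact gD)
      (by simp)
    have e1 : σ r.1.1 = A := hσl (r.1.1, A) (by simp)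
    have e2 : σ r.1.2 = B := hσl (r.1.2, B) (by simp)
    have e3 : σ s.1.1 = C := hσl (s.1.1, C) (by simp)
    have e4 : σ s.1.2 = D := hσl (s.1.2, D) (by simp)
    refine ⟨σ, hσg, permPair_eq ?_, permPair_eq ?_⟩
    · rw [show pset r = {r.1.1, r.1.2} from rfl, image_pair, e1, e2, hAB]
    · rw [show pset s = {s.1.1, s.1.2} from rfl, image_pair, e3, e4, hCD]
  · -- overlap of size one
    obtain ⟨x, hx⟩ := Finset.card_eq_one.mp hI
    obtain ⟨x', hx'⟩ := Finset.card_eq_one.mp (by rw [← hcard, hI])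
    have hgxx' : g x = g x' := by
      have h := hov
      rw [overlap_def, overlap_def, hx, hx'] at h
      simpa using h
    have hxr : x ∈ pset r := (Finset.mem_inter.mp (hx ▸ Finset.mem_singleton_self x)).1
    have hxs : x ∈ pset s := (Finset.mem_inter.mp (hx ▸ Finset.mem_singleton_self x)).2
    have hxr' : x' ∈ pset r' := (Finset.mem_inter.mp (hx' ▸ Finset.mem_singleton_self x')).1
    have hxs' : x' ∈ pset s' := (Finset.mem_inter.mp (hx' ▸ Finset.mem_singleton_self x')).2
    obtain ⟨u, u', hru, hr'u, hguu', hxu, hx'u⟩ := mate hrr' hxr hxr' hgxx'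
    obtain ⟨v, v', hsv, hs'v, hgvv', hxv, hx'v⟩ := mate hss' hxs hxs' hgxx'
    have humem : u ∈ pset r := by rw [hru]; simp
    have hvmem : v ∈ pset s := by rw [hsv]; simp
    have huv : u ≠ v := by
      intro hcon
      have : u ∈ pset r ∩ pset s := Finset.mem_inter.mpr ⟨humem, hcon ▸ hvmem⟩
      rw [hx, Finset.mem_singleton] at this
      exact hxu this.symm
    have humem' : u' ∈ pset r' := by rw [hr'u]; simp
    have hvmem' : v' ∈ pset s' := by rw [hs'v]; simp
    have huv' : u' ≠ v' := by
      intro hcon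
      have : u' ∈ pset r' ∩ pset s' := Finset.mem_inter.mpr ⟨humem', hcon ▸ hvmem'⟩
      rw [hx', Finset.mem_singleton] at this
      exact hx'u this.symm
    obtain ⟨σ, hσg, hσl, -⟩ := exists_perm_aux g 3 [(x, x'), (u, u'), (v, v')] rfl ∅
      (by
        simp only [List.map_cons, List.map_nil, List.nodup_cons, List.mem_cons,
          List.mem_singleton, List.not_mem_nil, not_or, not_false_iff, and_true,
          List.nodup_nil, List.mem_nil_iff, or_false]
        exact ⟨⟨hxu, hxv⟩, huv⟩)
      (by
        simp only [List.map_cons, List.map_nil, List.nodup_cons, List.mem_cons,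
          List.mem_singleton, List.not_mem_nil, not_or, not_false_iff, and_true,
          List.nodup_nil, List.mem_nil_iff, or_false]
        exact ⟨⟨hx'u, hx'v⟩, huv'⟩)
      (by
        intro p hp
        simp only [List.mem_cons, List.mem_singleton, List.not_mem_nil, or_false] at hp
        rcases hp with h | h | h
        · rw [h]; exact hgxx'
        · rw [h]; exact hguu'
        · rw [h]; exact hgvv')
      (by simp)
    have e1 : σ x = x' := hσl (x, x') (by simp)
    have e2 : σ u = u' := hσl (u, u') (by simp)
    have e3 : σ v = v' := hσl (v, v') (by simp)
    refine ⟨σ, hσg, permPair_eq ?_, permPair_eq ?_⟩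
    · rw [hru, image_pair, e1, e2, ← hr'u]
    · rw [hsv, image_pair, e1, e3, ← hs'v]
  · -- overlap of size two: r = s and r' = s'
    have h2r : (pset r).card ≤ (pset r ∩ pset s).card := by
      rw [pset_card, hI]; omega
    have h2s : (pset s).card ≤ (pset r ∩ pset s).card := by
      rw [pset_card, hI]; omega
    have hIr : pset r ∩ pset s = pset r :=
      Finset.eq_of_subset_of_card_le Finset.inter_subset_left h2r
    have hIs : pset r ∩ pset s = pset s :=
      Finset.eq_of_subset_of_card_le Finset.inter_subset_right h2s
    have hrs : r = s := pair_ext (hIr.symm.trans hIs)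
    have h2r' : (pset r').card ≤ (pset r' ∩ pset s').card := by
      rw [pset_card, ← hcard, hI]; omega
    have h2s' : (pset s').card ≤ (pset r' ∩ pset s').card := by
      rw [pset_card, ← hcard, hI]; omega
    have hrs' : r' = s' := pair_ext
      ((Finset.eq_of_subset_of_card_le Finset.inter_subset_left h2r').symm.trans
        (Finset.eq_of_subset_of_card_le Finset.inter_subset_right h2s'))
    subst hrs; subst hrs'
    obtain ⟨A, B, hAB, gA, gB, hABne⟩ := sameBlock_pick hrr'
    obtain ⟨σ, hσg, hσl, -⟩ := exists_perm_aux g 2 [(r.1.1, A), (r.1.2, B)] rfl ∅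
      (by
        simp only [List.map_cons, List.map_nil, List.nodup_cons, List.mem_singleton,
          List.not_mem_nil, not_false_iff, and_true, List.nodup_nil, List.mem_nil_iff, or_false]
        exact ne_of_lt r.2)
      (by
        simp only [List.map_cons, List.map_nil, List.nodup_cons, List.mem_singleton,
          List.not_mem_nil, not_false_iff, and_true, List.nodup_nil, List.mem_nil_iff, or_false]
        exact hABne)
      (by
        intro p hp
        simp only [List.mem_cons, List.mem_singleton, List.not_mem_nil, or_false] at hp
        rcases hp with h | h
        · rw [h]; exact gA
        · rw [h]; exact gB)
      (by simp)
    have e1 : σ r.1.1 = A := hσl (r.1.1, A) (by simp)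
    have e2 : σ r.1.2 = B := hσl (r.1.2, B) (by simp)
    have key : permPair σ r = r' := permPair_eq
      (by rw [show pset r = {r.1.1, r.1.2} from rfl, image_pair, e1, e2, hAB])
    exact ⟨σ, hσg, key, key⟩
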